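/- Let (x1⁰, x2⁰) be a nonzero real fixed point of the evolution operator of E6(a2,a3) (e1·e1 = e1 + a2 e2, e2·e2 = a3 e1 + e2, with 1 - a2 a3 ≠ 0) and suppose x1⁰ ≠ 0 and x2⁰ ≠ 0. Then the evolution algebra with structure matrix [[2x1⁰, 2a3 x2⁰],[2a2 x1⁰, 2x2⁰]] (the Jacobian of the evolution operator at the fixed point) is isomorphic to E6(b2,b3) with b2 = a3(x2⁰/x1⁰)² and b3 = a2(x1⁰/x2⁰)², via the basis change ẽ1 = e1/(2x1⁰), ẽ2 = e2/(2x2⁰). -/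

import Mathlib

/-- Multiplication of the evolution algebra with structure matrix `M`. -/
def evMul {n : ℕ} (M : Matrix (Fin n) (Fin n) ℝ) (x y : Fin n → ℝ) : Fin n → ℝ :=
  fun k => ∑ i, M i k * x i * y i

/-- The structure matrix of `E₆(a₂,a₃)`. -/
def E6 (a₂ a₃ : ℝ) : Matrix (Fin 2) (Fin 2) ℝ := ![![1, a₂], ![a₃, 1]]

/-- The diagonal basis-change map. -/
noncomputable def Tdiag (x₁ x₂ : ℝ) (h₁ : x₁ ≠ 0) (h₂ : x₂ ≠ 0) :
    (Fin 2 → ℝ) ≃ₗ[ℝ] (Fin 2 → ℝ) :=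
  { toFun := fun v => ![v 0 / (2 * x₁), v 1 / (2 * x₂)],
    invFun := fun v => ![2 * x₁ * v 0, 2 * x₂ * v 1],
    map_add' := by
      intro u v; funext k; fin_cases k <;> simp <;> ring
    map_smul' := by
      intro c v; funext k; fin_cases k <;> simp <;> ring
    left_inv := by
      intro v; funext k; fin_cases k <;> simp <;> field_simp
    right_inv := by
      intro v; funext k; fin_cases k <;> simp <;> field_simp }

/-- If `(x₁⁰,x₂⁰)` is a fixed point of the evolution operator of `E₆(a₂,a₃)` with both
coordinates nonzero, then the evolution algebra whose structure matrix is the Jacobian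
`[[2x₁⁰, 2a₃x₂⁰],[2a₂x₁⁰, 2x₂⁰]]` is isomorphic to `E₆(b₂,b₃)` with
`b₂ = a₃(x₂⁰/x₁⁰)²`, `b₃ = a₂(x₁⁰/x₂⁰)²`, via `ẽ1 = e1/(2x₁⁰)`, `ẽ2 = e2/(2x₂⁰)`. -/
theorem stmt5 (a₂ a₃ x₁ x₂ : ℝ) (hE : 1 - a₂ * a₃ ≠ 0)
    (h₁ : x₁ ≠ 0) (h₂ : x₂ ≠ 0)
    (hfix₁ : x₁ = x₁ ^ 2 + a₃ * x₂ ^ 2) (hfix₂ : x₂ = a₂ * x₁ ^ 2 + x₂ ^ 2) :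
    ∃ T : (Fin 2 → ℝ) ≃ₗ[ℝ] (Fin 2 → ℝ),
      (∀ x y, T (evMul (E6 (a₃ * (x₂ / x₁) ^ 2) (a₂ * (x₁ / x₂) ^ 2)) x y)
          = evMul (![![2 * x₁, 2 * a₃ * x₂], ![2 * a₂ * x₁, 2 * x₂]]) (T x) (T y)) ∧
      T ![1, 0] = ![1 / (2 * x₁), 0] ∧ T ![0, 1] = ![0, 1 / (2 * x₂)] := by
  refine ⟨Tdiag x₁ x₂ h₁ h₂, ?_, ?_, ?_⟩
  · intro x y
    funext k
    fin_cases k <;>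
      (simp [Tdiag, evMul, E6, Fin.sum_univ_two]; field_simp)
  · funext k; fin_cases k <;> simp [Tdiag]
  · funext k; fin_cases k <;> simp [Tdiag]
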